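/- Let W > 0, 0 < T_s < 1/(2W) and K ≥ 1, and set p_K(z) = z^K · T_K^{[2cos(2πWT_s), 2]}(z + z⁻¹). Then the maximum of |p_K(e^{-2πifT_s})| over f ∈ [-W, W] equals 2 · ((2 − 2cos(2πWT_s))/4)^K. -/

import Mathlib

open MeasureTheory Real

/-- The shifted Chebyshev polynomial `T_K^{[a,b]}(y) = 2((b-a)/4)^K T_K(2(y-a)/(b-a) - 1)`,
evaluated at a complex point `y`. -/
noncomputable def chebShiftC (K : ℕ) (a b : ℝ) (y : ℂ) : ℂ :=
  2 * (((b : ℂ) - (a : ℂ)) / 4) ^ K *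
    (Polynomial.Chebyshev.T ℂ (K : ℤ)).eval (2 / ((b : ℂ) - (a : ℂ)) * (y - (a : ℂ)) - 1)

/-- The Laurent-polynomial expression `p_K(z) = z^K ⬝ T_K^{[a,2]}(z + z⁻¹)`. -/
noncomputable def pKfun (K : ℕ) (a : ℝ) (z : ℂ) : ℂ := z ^ K * chebShiftC K a 2 (z + z⁻¹)

lemma norm_pK (a : ℝ) (ha : a < 2) (K : ℕ) (θ : ℝ) (hθ : a ≤ 2 * Real.cos θ) :
    ‖pKfun K a (Complex.exp (-(θ:ℂ) * Complex.I))‖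
      = 2 * ((2 - a)/4)^K *
        |Real.cos (K * Real.arccos (2/(2-a)*(2*Real.cos θ - a) - 1))| := by
  have h2a : (0:ℝ) < 2 - a := by linarith
  set x : ℝ := 2/(2-a)*(2*Real.cos θ - a) - 1 with hxdef
  have hc1 : Real.cos θ ≤ 1 := Real.cos_le_one θ
  have hx1 : x ≤ 1 := by
    rw [hxdef, sub_le_iff_le_add, div_mul_eq_mul_div, div_le_iff₀ h2a]
    nlinarith
  have hx0 : -1 ≤ x := by
    rw [hxdef, le_sub_iff_add_le]
    have : 0 ≤ 2/(2-a)*(2*Real.cos θ - a) :=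
      mul_nonneg (le_of_lt (by positivity)) (by linarith)
    linarith
  have hzinv : (Complex.exp (-(θ:ℂ) * Complex.I))⁻¹ = Complex.exp ((θ:ℂ) * Complex.I) := by
    rw [← Complex.exp_neg]; ring_nf
  have hsum : Complex.exp (-(θ:ℂ) * Complex.I) + Complex.exp ((θ:ℂ) * Complex.I)
      = 2 * Complex.cos (θ:ℂ) := by
    rw [Complex.two_cos]; ring_nf
  have harg : 2 / ((2:ℂ) - a) * (2 * Complex.cos (θ:ℂ) - a) - 1 = (x:ℂ) := by
    rw [hxdef, ← Complex.ofReal_cos]; push_cast; ring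
  have hcx : (x:ℂ) = Complex.cos ((Real.arccos x : ℝ):ℂ) := by
    rw [← Complex.ofReal_cos, Real.cos_arccos hx0 hx1]
  unfold pKfun chebShiftC
  simp only [Complex.ofReal_ofNat]
  rw [hzinv, hsum, harg, hcx, Polynomial.Chebyshev.T_complex_cos]
  have h2 : Complex.cos (((K:ℤ):ℂ) * ((Real.arccos x : ℝ):ℂ))
      = ((Real.cos ((K:ℝ) * Real.arccos x) : ℝ) : ℂ) := by
    push_cast; ring_nf
  have h3 : ((2:ℂ) - a)/4 = (((2-a)/4 : ℝ) : ℂ) := by push_cast; ring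
  have hz1 : ‖Complex.exp (-(θ:ℂ) * Complex.I)‖ = 1 := by
    rw [Complex.norm_exp]; simp
  rw [h2, h3, norm_mul, norm_pow, hz1, one_pow, one_mul,
    norm_mul, norm_mul, norm_pow, Complex.norm_real, Complex.norm_real, Real.norm_eq_abs,
    abs_of_nonneg (by positivity : (0:ℝ) ≤ (2-a)/4)]
  norm_num

/-- The maximum of `|p_K(e^{-2πifTs})|` over `f ∈ [-W, W]` equals
`2 ((2 - 2cos(2πWTs))/4)^K`. -/
theorem max_abs_pK_on_band
    (W Ts : ℝ) (hW : 0 < W) (hTs : 0 < Ts) (hNyq : Ts < 1 / (2 * W)) (K : ℕ) (hK : 1 ≤ K) :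
    IsGreatest
      ((fun f : ℝ =>
          ‖pKfun K (2 * Real.cos (2 * Real.pi * W * Ts))
              (Complex.exp (-(2 * Real.pi * Complex.I * f * Ts)))‖) '' Set.Icc (-W) W)
      (2 * ((2 - 2 * Real.cos (2 * Real.pi * W * Ts)) / 4) ^ K) := by
  have hπ := Real.pi_pos
  set α := 2 * Real.pi * W * Ts with hα
  have hαpos : 0 < α := by positivity
  have hαπ : α < Real.pi := by
    rw [lt_div_iff₀ (by positivity)] at hNyq; nlinarith
  have ha2 : 2 * Real.cos α < 2 := by
    have h := Real.cos_lt_cos_of_nonneg_of_le_pi le_rfl hαπ.le hαpos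
    rw [Real.cos_zero] at h; linarith
  set a := 2 * Real.cos α with hadef
  constructor
  · refine ⟨0, ⟨by linarith, by linarith⟩, ?_⟩
    have hz : Complex.exp (-(2 * (Real.pi:ℂ) * Complex.I * ((0:ℝ):ℂ) * Ts))
        = Complex.exp (-(((0:ℝ)):ℂ) * Complex.I) := by norm_num
    simp only [hz]
    rw [norm_pK a (by linarith) K 0 (by rw [Real.cos_zero]; linarith)]
    have h1 : 2/(2-a)*(2*Real.cos 0 - a) - 1 = 1 := by
      have h2a : (2:ℝ) - a ≠ 0 := by linarith
      rw [Real.cos_zero]; field_simp; ring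
    rw [h1, Real.arccos_one]
    simp
  · rintro v ⟨f, hf, rfl⟩
    have h1 : Complex.exp (-(2 * (Real.pi:ℂ) * Complex.I * (f:ℂ) * Ts))
        = Complex.exp (-(((2*Real.pi*f*Ts : ℝ)):ℂ) * Complex.I) := by push_cast; ring_nf
    have habs : |2*Real.pi*f*Ts| ≤ α := by
      have hfW : |f| ≤ W := abs_le.mpr ⟨hf.1, hf.2⟩
      have h2 : |2*Real.pi*f*Ts| = 2*Real.pi*(|f|)*Ts := by
        simp [abs_mul, abs_of_pos hπ, abs_of_pos hTs]
      rw [h2, hα]; nlinarith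
    have hcos : a ≤ 2 * Real.cos (2*Real.pi*f*Ts) := by
      have h := Real.cos_le_cos_of_nonneg_of_le_pi (abs_nonneg (2*Real.pi*f*Ts)) hαπ.le habs
      rw [Real.cos_abs] at h; rw [hadef]; linarith
    show ‖pKfun K a (Complex.exp (-(2 * (Real.pi:ℂ) * Complex.I * (f:ℂ) * Ts)))‖ ≤ _
    rw [h1]
    rw [norm_pK a (by linarith) K _ hcos]
    calc 2 * ((2-a)/4)^K * |Real.cos ((K:ℝ) * Real.arccos (2/(2-a)*(2*Real.cos (2*Real.pi*f*Ts) - a) - 1))|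
        ≤ 2 * ((2-a)/4)^K * 1 := by
          apply mul_le_mul_of_nonneg_left (Real.abs_cos_le_one _)
          have h4 : (0:ℝ) ≤ (2-a)/4 := by linarith
          positivity
      _ = 2 * ((2-a)/4)^K := mul_one _
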